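/- arXiv:math/0305012 — 2 statements merged into one kernel-verified Lean document; each statement's English description precedes it below -/
import Mathlib

section
/- If there exists a negligible fcc-compatible function a : Λ → ℝ for a saturated packing Λ, then there exists a constant C such that for all x ∈ ℝ³ and r ≥ 1, the finite density satisfies δ(x,r,Λ) ≤ π/√18 + C/r. -/
open MeasureTheory Metric Real Filter

noncomputable section

abbrev E3 := EuclideanSpace ℝ (Fin 3)

/-- A packing: centers pairwise at distance at least 2. -/
def IsPacking (Λ : Set E3) : Prop :=
  ∀ u ∈ Λ, ∀ v ∈ Λ, u ≠ v → 2 ≤ dist u v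

/-- A saturated packing: a packing such that every point of space is within
distance 2 of some center. -/
def IsSaturated (Λ : Set E3) : Prop :=
  IsPacking Λ ∧ ∀ x : E3, ∃ v ∈ Λ, dist x v ≤ 2

/-- `A(x,r,Λ)`: volume of the part of `B(x,r)` covered by the unit balls of the packing. -/
def packVol (Λ : Set E3) (x : E3) (r : ℝ) : ℝ :=
  (volume (closedBall x r ∩ ⋃ v ∈ Λ, closedBall v 1)).toReal

/-- `δ(x,r,Λ)`: the finite density. -/
def density (Λ : Set E3) (x : E3) (r : ℝ) : ℝ :=
  packVol Λ x r / (volume (closedBall x r)).toReal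

/-- The Voronoi cell of `v` with respect to `Λ`. -/
def Voronoi (Λ : Set E3) (v : E3) : Set E3 :=
  {x : E3 | ∀ w ∈ Λ, dist x v ≤ dist x w}

/-- `a` is negligible with constant `C₁`. -/
def NegligibleWith (Λ : Set E3) (a : E3 → ℝ) (C₁ : ℝ) : Prop :=
  ∀ (x : E3) (r : ℝ), 1 ≤ r → ∑ᶠ v ∈ Λ ∩ closedBall x r, a v ≤ C₁ * r ^ 2

/-- `a` is fcc-compatible for `Λ`. -/
def FccCompatible (Λ : Set E3) (a : E3 → ℝ) : Prop :=
  ∀ v ∈ Λ, Real.sqrt 32 ≤ (volume (Voronoi Λ v)).toReal + a v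

end


-- volume of closed ball in E3
lemma vol_cb (x : E3) (r : ℝ) (hr : 0 ≤ r) :
    (volume (closedBall x r)).toReal = 4 * π / 3 * r ^ 3 := by
  rw [EuclideanSpace.volume_closedBall]
  have h2 : Real.Gamma ((Fintype.card (Fin 3) : ℝ) / 2 + 1) = 3 / 4 * Real.sqrt π := by
    simp only [Fintype.card_fin]
    push_cast
    rw [show (3:ℝ)/2 + 1 = (1/2 + 1) + 1 by ring, Real.Gamma_add_one (by norm_num),
      Real.Gamma_add_one (by norm_num), Real.Gamma_one_half_eq]
    ring
  rw [h2]
  have hs : Real.sqrt π ≠ 0 := ne_of_gt (Real.sqrt_pos.2 Real.pi_pos)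
  have h3 : Real.sqrt π ^ Fintype.card (Fin 3) / (3 / 4 * Real.sqrt π) = 4 * π / 3 := by
    simp only [Fintype.card_fin]
    rw [pow_succ, Real.sq_sqrt Real.pi_pos.le]
    field_simp
  rw [h3, ← ENNReal.ofReal_pow hr, ← ENNReal.ofReal_mul (by positivity)]
  rw [ENNReal.toReal_ofReal (by positivity)]
  · simp only [Fintype.card_fin]; ring

lemma packing_finite {Λ : Set E3} (hP : IsPacking Λ) (x : E3) (R : ℝ) :
    (Λ ∩ closedBall x R).Finite := by
  obtain ⟨t, htf, hcov⟩ := Metric.totallyBounded_iff.1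
    (isCompact_closedBall x R).totallyBounded 1 one_pos
  have : Λ ∩ closedBall x R ⊆ ⋃ y ∈ t, Λ ∩ closedBall x R ∩ ball y 1 := by
    intro z hz
    obtain ⟨y, hy, hzy⟩ := Set.mem_iUnion₂.1 (hcov hz.2)
    exact Set.mem_iUnion₂.2 ⟨y, hy, hz, hzy⟩
  refine Set.Finite.subset (htf.biUnion fun y _ => ?_) this
  refine Set.Subsingleton.finite fun u hu v hv => ?_
  by_contra hne
  have := hP u hu.1.1 v hv.1.1 hne
  have : dist u v < 2 := by
    calc dist u v ≤ dist u y + dist y v := dist_triangle _ _ _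
    _ < 1 + 1 := by
        have h1 := mem_ball.1 hu.2
        have h2 := mem_ball.1 hv.2
        rw [dist_comm y v] at *
        linarith
    _ = 2 := by norm_num
  linarith

lemma voronoi_closed (Λ : Set E3) (v : E3) : IsClosed (Voronoi Λ v) := by
  have : Voronoi Λ v = ⋂ w ∈ Λ, {x : E3 | dist x v ≤ dist x w} := by
    ext z; simp [Voronoi]
  rw [this]
  exact isClosed_biInter fun w _ =>
    isClosed_le (continuous_id.dist continuous_const) (continuous_id.dist continuous_const)

lemma voronoi_aedisjoint {Λ : Set E3} (hP : IsPacking Λ) {v w : E3}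
    (hv : v ∈ Λ) (hw : w ∈ Λ) (hvw : v ≠ w) :
    volume (Voronoi Λ v ∩ Voronoi Λ w) = 0 := by
  have hsub : Voronoi Λ v ∩ Voronoi Λ w ⊆ (AffineSubspace.perpBisector v w : Set E3) := by
    intro z hz
    rw [SetLike.mem_coe, AffineSubspace.mem_perpBisector_iff_dist_eq]
    exact le_antisymm (hz.1 w hw) (hz.2 v hv)
  refine measure_mono_null hsub (Measure.addHaar_affineSubspace volume _ ?_)
  intro htop
  have : v ∈ AffineSubspace.perpBisector v w := htop ▸ AffineSubspace.mem_top ℝ E3 v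
  rw [AffineSubspace.mem_perpBisector_iff_dist_eq, dist_self] at this
  exact hvw (dist_eq_zero.1 this.symm)

set_option maxHeartbeats 1000000 in
theorem density_bound (Λ : Set E3) (hΛ : IsSaturated Λ)
    (a : E3 → ℝ) (C₁ : ℝ)
    (hneg : NegligibleWith Λ a C₁) (hfcc : FccCompatible Λ a) :
    ∃ C : ℝ, ∀ (x : E3) (r : ℝ), 1 ≤ r →
      density Λ x r ≤ π / Real.sqrt 18 + C / r := by
  suffices h : ∀ C : ℝ, C = 63 * (π / Real.sqrt 18) + 4 * |C₁| →
      ∀ (x : E3) (r : ℝ), 1 ≤ r → density Λ x r ≤ π / Real.sqrt 18 + C / r by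
    exact ⟨_, h _ rfl⟩
  intro C hCdef x r hr
  have hr0 : (0:ℝ) < r := lt_of_lt_of_le one_pos hr
  have hfin := packing_finite hΛ.1 x (r+1)
  set F := hfin.toFinset with hF
  obtain ⟨N, hNdef⟩ : ∃ N : ℕ, N = F.card := ⟨_, rfl⟩
  obtain ⟨κ, hκ⟩ : ∃ κ : ℝ, κ = 4 * π / 3 := ⟨_, rfl⟩
  have hκpos : 0 < κ := by rw [hκ]; positivity
  have hs1 : (1:ℝ) ≤ Real.sqrt 32 := by
    rw [show (1:ℝ) = Real.sqrt 1 from Real.sqrt_one.symm]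
    exact Real.sqrt_le_sqrt (by norm_num)
  have hspos : (0:ℝ) < Real.sqrt 32 := by linarith
  have hratio : Real.sqrt 32 / Real.sqrt 18 = 4 / 3 := by
    rw [← Real.sqrt_div (by norm_num : (0:ℝ) ≤ 32),
      show (32:ℝ)/18 = (4/3)^2 by norm_num, Real.sqrt_sq (by norm_num)]
  have hDs : (π / Real.sqrt 18) * Real.sqrt 32 = κ := by
    calc (π / Real.sqrt 18) * Real.sqrt 32 = π * (Real.sqrt 32 / Real.sqrt 18) := by ring
    _ = π * (4/3) := by rw [hratio]
    _ = κ := by rw [hκ]; ring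
  have hFmem : ∀ v ∈ F, v ∈ Λ ∧ dist v x ≤ r + 1 := by
    intro v hv
    have h := hfin.mem_toFinset.1 hv
    exact ⟨h.1, mem_closedBall.1 h.2⟩
  -- (A) bound on packVol
  have hsubA : closedBall x r ∩ ⋃ v ∈ Λ, closedBall v 1 ⊆ ⋃ v ∈ F, closedBall v 1 := by
    rintro y ⟨hy1, hy2⟩
    obtain ⟨v, hvΛ, hyv⟩ := Set.mem_iUnion₂.1 hy2
    refine Set.mem_iUnion₂.2 ⟨v, hfin.mem_toFinset.2 ⟨hvΛ, mem_closedBall.2 ?_⟩, hyv⟩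
    calc dist v x ≤ dist v y + dist y x := dist_triangle _ _ _
    _ ≤ 1 + r := add_le_add (by rw [dist_comm]; exact mem_closedBall.1 hyv) (mem_closedBall.1 hy1)
    _ = r + 1 := by ring
  have hsum_ne : ∑ v ∈ F, volume (closedBall v 1) ≠ ⊤ :=
    (ENNReal.sum_lt_top.2 fun v _ => measure_closedBall_lt_top).ne
  have hA : packVol Λ x r ≤ (N:ℝ) * κ := by
    unfold packVol
    have h1 : volume (closedBall x r ∩ ⋃ v ∈ Λ, closedBall v 1)
        ≤ ∑ v ∈ F, volume (closedBall v 1) :=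
      le_trans (measure_mono hsubA) (measure_biUnion_finset_le _ _)
    refine (ENNReal.toReal_mono hsum_ne h1).trans (le_of_eq ?_)
    rw [ENNReal.toReal_sum fun v _ => measure_closedBall_lt_top.ne]
    calc ∑ v ∈ F, (volume (closedBall v 1)).toReal = ∑ _v ∈ F, κ := by
          refine Finset.sum_congr rfl fun v _ => ?_
          rw [vol_cb v 1 zero_le_one, hκ]; ring
    _ = (N:ℝ) * κ := by rw [hNdef, Finset.sum_const, nsmul_eq_mul]
  -- (B) bound on N via Voronoi cells
  have hVsub : ∀ v, Voronoi Λ v ⊆ closedBall v 2 := by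
    intro v z hz
    obtain ⟨w, hw, hzw⟩ := hΛ.2 z
    exact mem_closedBall.2 ((hz w hw).trans hzw)
  have hVne : ∀ v ∈ F, volume (Voronoi Λ v) ≠ ⊤ := fun v _ =>
    ((measure_mono (hVsub v)).trans_lt measure_closedBall_lt_top).ne
  have hUnion : volume (⋃ v ∈ F, Voronoi Λ v) = ∑ v ∈ F, volume (Voronoi Λ v) := by
    refine measure_biUnion_finset₀ ?_ fun v _ => (voronoi_closed Λ v).measurableSet.nullMeasurableSet
    intro v hv w hw hvw
    exact voronoi_aedisjoint hΛ.1 (hFmem v hv).1 (hFmem w hw).1 hvw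
  have hUsub : (⋃ v ∈ F, Voronoi Λ v) ⊆ closedBall x (r+3) := by
    refine Set.iUnion₂_subset fun v hv => (hVsub v).trans (closedBall_subset_closedBall' ?_)
    linarith [(hFmem v hv).2]
  have hsumV : ∑ v ∈ F, (volume (Voronoi Λ v)).toReal ≤ κ * (r+3)^3 := by
    rw [← ENNReal.toReal_sum hVne, ← hUnion]
    have hlt : volume (closedBall x (r+3)) ≠ ⊤ := measure_closedBall_lt_top.ne
    have := ENNReal.toReal_mono hlt (measure_mono hUsub)
    rw [vol_cb x (r+3) (by linarith)] at this
    calc (volume (⋃ v ∈ F, Voronoi Λ v)).toReal ≤ 4 * π / 3 * (r+3)^3 := this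
    _ = κ * (r+3)^3 := by rw [hκ]
  have hsuma : ∑ v ∈ F, a v ≤ C₁ * (r+1)^2 := by
    have h := hneg x (r+1) (by linarith)
    rwa [← hfin.coe_toFinset, finsum_mem_coe_finset] at h
  have hN : (N:ℝ) * Real.sqrt 32 ≤ κ * (r+3)^3 + C₁ * (r+1)^2 := by
    have hcard : F.card • Real.sqrt 32 ≤ ∑ v ∈ F, ((volume (Voronoi Λ v)).toReal + a v) :=
      Finset.card_nsmul_le_sum F _ _ fun v hv => hfcc v (hFmem v hv).1
    rw [nsmul_eq_mul, Finset.sum_add_distrib, ← hNdef] at hcard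
    linarith
  -- final algebra
  have hP0 : (0:ℝ) ≤ packVol Λ x r := ENNReal.toReal_nonneg
  simp only [density]
  rw [vol_cb x r hr0.le, div_le_iff₀ (by positivity)]
  obtain ⟨P, hPdef⟩ : ∃ P : ℝ, P = packVol Λ x r := ⟨_, rfl⟩
  rw [← hPdef]
  rw [← hPdef] at hA hP0
  have key : P * Real.sqrt 32 ≤ (κ*(r+3)^3 + C₁*(r+1)^2) * κ := by
    calc P * Real.sqrt 32 ≤ ((N:ℝ)*κ) * Real.sqrt 32 :=
          mul_le_mul_of_nonneg_right hA hspos.le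
    _ = ((N:ℝ)*Real.sqrt 32) * κ := by ring
    _ ≤ (κ*(r+3)^3 + C₁*(r+1)^2) * κ := mul_le_mul_of_nonneg_right hN hκpos.le
  have hCs : C * Real.sqrt 32 = 63*κ + 4*|C₁| *Real.sqrt 32 := by
    calc C * Real.sqrt 32 = 63*((π / Real.sqrt 18) * Real.sqrt 32) + 4*|C₁| *Real.sqrt 32 := by
          rw [hCdef]; ring
    _ = 63*κ + 4*|C₁| *Real.sqrt 32 := by rw [hDs]
  have hCr : C / r * r^3 = C * r^2 := by field_simp
  have expand : ((π/Real.sqrt 18 + C/r) * (κ * r^3)) * Real.sqrt 32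
      = κ*κ*r^3 + (C * Real.sqrt 32)*κ*r^2 := by
    calc ((π/Real.sqrt 18 + C/r) * (κ * r^3)) * Real.sqrt 32
        = ((π/Real.sqrt 18) * Real.sqrt 32)*κ*r^3 + (C/r * r^3)*κ*Real.sqrt 32 := by ring
    _ = κ*κ*r^3 + (C * Real.sqrt 32)*κ*r^2 := by rw [hDs, hCr]; ring
  have hdiv : κ*(r+3)^3 + C₁*(r+1)^2 ≤ κ*r^3 + (C * Real.sqrt 32)*r^2 := by
    rw [hCs]
    have h1 : κ*(r+3)^3 - κ*r^3 = κ*(9*r^2 + 27*r + 27) := by ring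
    have h2 : 9*r^2 + 27*r + 27 ≤ 63*r^2 := by nlinarith [sq_nonneg (r-1)]
    have h3 : C₁*(r+1)^2 ≤ 4*|C₁| *Real.sqrt 32*r^2 := by
      have hC1 : C₁*(r+1)^2 ≤ |C₁| *(r+1)^2 :=
        mul_le_mul_of_nonneg_right (le_abs_self C₁) (by positivity)
      have h4 : (r+1)^2 ≤ 4*r^2 := by nlinarith [sq_nonneg (r-1)]
      have h5 : |C₁| *(r+1)^2 ≤ |C₁| *(4*r^2) :=
        mul_le_mul_of_nonneg_left h4 (abs_nonneg C₁)
      have h6 : |C₁| *(4*r^2) ≤ 4*|C₁| *Real.sqrt 32*r^2 := by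
        nlinarith [mul_nonneg (mul_nonneg (abs_nonneg C₁) (sq_nonneg r)) (sub_nonneg.2 hs1)]
      linarith
    linarith [h3, mul_le_mul_of_nonneg_left h2 hκpos.le]
  have hfinal : (κ*(r+3)^3 + C₁*(r+1)^2) * κ
      ≤ ((π/Real.sqrt 18 + C/r) * (κ * r^3)) * Real.sqrt 32 := by
    rw [expand]
    linarith [mul_le_mul_of_nonneg_right hdiv hκpos.le]
  have := (mul_le_mul_iff_of_pos_right hspos).1 (key.trans hfinal)
  calc P ≤ (π/Real.sqrt 18 + C/r) * (κ * r^3) := this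
  _ = (π/Real.sqrt 18 + C/r) * (4 * π / 3 * r^3) := by rw [hκ]
end

section
/- For a saturated packing Λ with a negligible fcc-compatible function a, one has √32·|Λ(x,r+1)| ≤ C₁(r+1)² + vol B(x,r+3) for all x ∈ ℝ³ and r ≥ 1, where C₁ is the negligibility constant. -/
open MeasureTheory Metric Real Filter

theorem card_bound (Λ : Set E3) (hΛ : IsSaturated Λ)
    (a : E3 → ℝ) (C₁ : ℝ)
    (hneg : NegligibleWith Λ a C₁) (hfcc : FccCompatible Λ a)
    (x : E3) (r : ℝ) (hr : 1 ≤ r) :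
    Real.sqrt 32 * ((Λ ∩ closedBall x (r + 1)).ncard : ℝ) ≤
      C₁ * (r + 1) ^ 2 + (volume (closedBall x (r + 3))).toReal := by
  obtain ⟨hpack, hsat⟩ := hΛ
  -- Λ is closed and discrete
  have hpair : Λ.Pairwise fun u v => 2 ≤ dist u v := fun u hu v hv huv => hpack u hu v hv huv
  have hclosed : IsClosed Λ := isClosed_of_pairwise_le_dist two_pos hpair
  have hdisc : DiscreteTopology Λ := by
    rw [discreteTopology_subtype_iff]
    intro y hy
    rw [← Filter.empty_mem_iff_bot]
    have h1 : Metric.ball y 2 ∈ nhdsWithin y {y}ᶜ ⊓ Filter.principal Λ :=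
      Filter.mem_inf_of_left (mem_nhdsWithin_of_mem_nhds (ball_mem_nhds y two_pos))
    have h2 : ({y}ᶜ : Set E3) ∈ nhdsWithin y {y}ᶜ ⊓ Filter.principal Λ :=
      Filter.mem_inf_of_left (mem_nhdsWithin.2 ⟨Set.univ, isOpen_univ, trivial,
        Set.inter_subset_right⟩)
    have h3 : Λ ∈ nhdsWithin y {y}ᶜ ⊓ Filter.principal Λ :=
      Filter.mem_inf_of_right (Filter.mem_principal_self Λ)
    have : Metric.ball y 2 ∩ (({y}ᶜ : Set E3) ∩ Λ) = ∅ := by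
      ext z
      simp only [Set.mem_inter_iff, Set.mem_empty_iff_false, iff_false, not_and,
        Set.mem_compl_iff, Set.mem_singleton_iff]
      intro hz hzy hzΛ
      have : dist z y < 2 := mem_ball.mp hz
      exact absurd (hpack z hzΛ y hy hzy) (not_le.mpr this)
    exact this ▸ Filter.inter_mem h1 (Filter.inter_mem h2 h3)
  -- finiteness of Λ ∩ closedBall x (r+1)
  have hfin : (Λ ∩ closedBall x (r + 1)).Finite := by
    have := Metric.finite_isBounded_inter_isClosed (K := closedBall x (r + 1)) (s := Λ)
      ⟨hdisc⟩ isBounded_closedBall hclosed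
    exact this.subset (by rw [Set.inter_comm])
  set S : Set E3 := Λ ∩ closedBall x (r + 1) with hS
  set F : Finset E3 := hfin.toFinset with hF
  have hFmem : ∀ v ∈ F, v ∈ Λ ∧ v ∈ closedBall x (r + 1) := by
    intro v hv; exact hfin.mem_toFinset.mp hv
  -- Voronoi cells are closed
  have hVclosed : ∀ v : E3, IsClosed (Voronoi Λ v) := by
    intro v
    have : Voronoi Λ v = ⋂ w ∈ Λ, {y : E3 | dist y v ≤ dist y w} := by
      ext y; simp [Voronoi]
    rw [this]
    exact isClosed_biInter fun w _ => isClosed_le (continuous_id.dist continuous_const)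
      (continuous_id.dist continuous_const)
  -- Voronoi cells lie in the ball of radius 2 around their center
  have hVsub : ∀ v ∈ Λ, Voronoi Λ v ⊆ closedBall v 2 := by
    intro v hv y hy
    obtain ⟨w, hw, hw2⟩ := hsat y
    exact mem_closedBall.2 ((hy w hw).trans hw2)
  -- hence, for v ∈ F, in the big ball
  have hVx : ∀ v ∈ F, Voronoi Λ v ⊆ closedBall x (r + 3) := by
    intro v hv y hy
    obtain ⟨hvΛ, hvB⟩ := hFmem v hv
    have h1 : dist y v ≤ 2 := hVsub v hvΛ hy
    have h2 : dist v x ≤ r + 1 := hvB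
    have := dist_triangle y v x
    rw [mem_closedBall]; linarith
  -- Voronoi cells of distinct centers are a.e. disjoint
  have hdisj : ∀ u ∈ Λ, ∀ v ∈ Λ, u ≠ v → volume (Voronoi Λ u ∩ Voronoi Λ v) = 0 := by
    intro u hu v hv huv
    have hsub : Voronoi Λ u ∩ Voronoi Λ v ⊆ (AffineSubspace.perpBisector u v : Set E3) := by
      rintro y ⟨hyu, hyv⟩
      rw [SetLike.mem_coe, AffineSubspace.mem_perpBisector_iff_dist_eq]
      exact le_antisymm (hyu v hv) (hyv u hu)
    refine measure_mono_null hsub (Measure.addHaar_affineSubspace volume _ ?_)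
    simpa [AffineSubspace.perpBisector_eq_top] using huv
  -- finiteness of Voronoi volumes
  have hVfin : ∀ v ∈ Λ, volume (Voronoi Λ v) ≠ ⊤ := by
    intro v hv
    exact ((measure_mono (hVsub v hv)).trans_lt
      ((isCompact_closedBall v 2).measure_lt_top)).ne
  -- the sum of Voronoi volumes is bounded by the big ball
  have hsumvol : ∑ v ∈ F, (volume (Voronoi Λ v)).toReal ≤
      (volume (closedBall x (r + 3))).toReal := by
    have h1 : ∑ v ∈ F, volume (Voronoi Λ v) = volume (⋃ v ∈ F, Voronoi Λ v) := by
      refine (measure_biUnion_finset₀ ?_ ?_).symm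
      · intro u hu v hv huv
        exact hdisj u (hFmem u (by simpa using hu)).1 v (hFmem v (by simpa using hv)).1 huv
      · intro v _
        exact (hVclosed v).measurableSet.nullMeasurableSet
    have h2 : volume (⋃ v ∈ F, Voronoi Λ v) ≤ volume (closedBall x (r + 3)) :=
      measure_mono (Set.iUnion₂_subset hVx)
    calc ∑ v ∈ F, (volume (Voronoi Λ v)).toReal
        = (∑ v ∈ F, volume (Voronoi Λ v)).toReal :=
          (ENNReal.toReal_sum fun v hv => hVfin v (hFmem v hv).1).symm
      _ ≤ (volume (closedBall x (r + 3))).toReal := by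
          rw [h1]
          exact ENNReal.toReal_mono ((isCompact_closedBall x (r + 3)).measure_lt_top).ne h2
  -- the sum of a over F is bounded
  have hsuma : ∑ v ∈ F, a v ≤ C₁ * (r + 1) ^ 2 := by
    have : ∑ v ∈ F, a v = ∑ᶠ v ∈ Λ ∩ closedBall x (r + 1), a v := by
      rw [← finsum_mem_coe_finset, hF, hfin.coe_toFinset]
    rw [this]
    exact hneg x (r + 1) (by linarith)
  -- fcc-compatibility summed
  have hmain : Real.sqrt 32 * (F.card : ℝ) ≤
      ∑ v ∈ F, (volume (Voronoi Λ v)).toReal + ∑ v ∈ F, a v := by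
    rw [← Finset.sum_add_distrib]
    calc Real.sqrt 32 * (F.card : ℝ) = ∑ _v ∈ F, Real.sqrt 32 := by
          rw [Finset.sum_const, nsmul_eq_mul, mul_comm]
      _ ≤ ∑ v ∈ F, ((volume (Voronoi Λ v)).toReal + a v) :=
          Finset.sum_le_sum fun v hv => hfcc v (hFmem v hv).1
  have hcard : (Λ ∩ closedBall x (r + 1)).ncard = F.card :=
    Set.ncard_eq_toFinset_card _ hfin
  rw [hcard]
  linarith
end
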